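/- For nonnegative integers n_i, n_j, n_k with n = n_i + n_j + n_k, n_i, n_j, n_k ≥ 1, the sum Σ_{m=1}^{n} (n_i/n)·[C(n_j+n_k, m)/C(n-1, m)]·[ ((n_j)_2/(n_j+n_k)_2)·(m-1)/(m+1) + (2n_j/(n_j+n_k))·1/(m+1) ] minus Σ_{m=1}^{n} (n_i/n)·C(n_j, m)/C(n-1, m) equals (n_j)_2/(n(n_j+n_k-1)) - n_i n_j/(n(n_i+n_k)) - 2 n_i n_j n_k/(n·(n_j+n_k)_2) + 2 n_i n_j n_k/((n_j+n_k+1)_3)·(H_n - H_{n_i - 1}). -/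

import Mathlib

/-- The `k`-th harmonic number `1 + 1/2 + ⋯ + 1/k`, with `H 0 = 0`. -/
def H (k : ℕ) : ℚ := ∑ i ∈ Finset.range k, (1 : ℚ) / (i + 1)

lemma H_succ' (k : ℕ) : H (k+1) = H k + 1/((k:ℚ)+1) := by
  simp [H, Finset.sum_range_succ]

lemma choose_ne (a m : ℕ) (h : m ≤ a) : ((Nat.choose a m : ℚ)) ≠ 0 := by
  exact_mod_cast (Nat.choose_pos h).ne'

lemma key0 (b c : ℕ) :
    ∑ m ∈ Finset.range (b+1), (Nat.choose b m : ℚ) / (Nat.choose (b+c) m : ℚ)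
      = ((b:ℚ)+c+1)/((c:ℚ)+1) := by
  have hc : ((c:ℚ)+1) ≠ 0 := by positivity
  have step : ∀ m ∈ Finset.range (b+1),
      (Nat.choose b m : ℚ) / (Nat.choose (b+c) m : ℚ) =
      (fun m => (((b:ℚ)+c+1-m)/((c:ℚ)+1)) * ((Nat.choose b m : ℚ)/(Nat.choose (b+c) m : ℚ))) m
      - (fun m => (((b:ℚ)+c+1-m)/((c:ℚ)+1)) * ((Nat.choose b m : ℚ)/(Nat.choose (b+c) m : ℚ))) (m+1) := by
    intro m hm
    simp only [Finset.mem_range] at hm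
    have hmb : m ≤ b := Nat.lt_succ_iff.mp hm
    beta_reduce
    rcases eq_or_lt_of_le hmb with heq | hlt
    · subst heq
      simp only [Nat.choose_succ_self, Nat.cast_zero, zero_div, mul_zero, sub_zero,
        Nat.choose_self, Nat.cast_one]
      rw [show (m:ℚ)+c+1-m = (c:ℚ)+1 by ring, div_self hc, one_mul]
    · have h1 : (Nat.choose b (m+1) : ℚ) * (m+1) = (Nat.choose b m : ℚ) * ((b:ℚ) - m) := by
        have := congrArg (Nat.cast (R:=ℚ)) (Nat.choose_succ_right_eq b m)
        push_cast [Nat.cast_sub hmb] at this; linarith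
      have h2 : (Nat.choose (b+c) (m+1) : ℚ) * (m+1) = (Nat.choose (b+c) m : ℚ) * ((b:ℚ)+c - m) := by
        have := congrArg (Nat.cast (R:=ℚ)) (Nat.choose_succ_right_eq (b+c) m)
        push_cast [Nat.cast_sub (le_trans hmb (Nat.le_add_right _ _))] at this; linarith
      have hA : (Nat.choose (b+c) m : ℚ) ≠ 0 := choose_ne _ _ (le_trans hmb (Nat.le_add_right _ _))
      have hA' : (Nat.choose (b+c) (m+1) : ℚ) ≠ 0 := choose_ne _ _ (le_trans hlt (Nat.le_add_right _ _))
      have hm1 : ((m:ℚ)+1) ≠ 0 := by positivity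
      have ham : ((b:ℚ)+c-m) ≠ 0 := by
        have h' : (m:ℚ) < (b:ℚ) := by exact_mod_cast hlt
        have h'' : (0:ℚ) ≤ (c:ℚ) := by positivity
        nlinarith
      have hr : (Nat.choose b (m+1) : ℚ)/(Nat.choose (b+c) (m+1) : ℚ)
          = ((Nat.choose b m : ℚ)*((b:ℚ)-m))/((Nat.choose (b+c) m : ℚ)*((b:ℚ)+c-m)) := by
        rw [div_eq_div_iff hA' (mul_ne_zero hA ham)]
        apply mul_right_cancel₀ hm1
        linear_combination ((Nat.choose (b+c) m : ℚ)*((b:ℚ)+c-m)) * h1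
          - ((Nat.choose b m : ℚ)*((b:ℚ)-m)) * h2
      rw [hr]
      push_cast
      field_simp
      ring
  rw [Finset.sum_congr rfl step, Finset.sum_range_sub']
  simp [Nat.choose_succ_self]

lemma key1 (b c : ℕ) :
    ∑ m ∈ Finset.range (b+1), (Nat.choose b m : ℚ) / ((Nat.choose (b+c) m : ℚ) * ((m:ℚ)+1))
      = (((b:ℚ)+c+1)/((b:ℚ)+1)) * (H (b+c+1) - H c) := by
  induction c with
  | zero =>
    have : ∀ m ∈ Finset.range (b+1),
        (Nat.choose b m : ℚ) / ((Nat.choose (b+0) m : ℚ) * ((m:ℚ)+1)) = 1/((m:ℚ)+1) := by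
      intro m hm
      simp only [Finset.mem_range] at hm
      have h := choose_ne b m (Nat.lt_succ_iff.mp hm)
      rw [Nat.add_zero]
      rw [div_mul_eq_div_div, div_self h]
    rw [Finset.sum_congr rfl this]
    have : ∑ m ∈ Finset.range (b+1), 1/((m:ℚ)+1) = H (b+1) := by simp [H]
    rw [this]
    simp [H]
    field_simp
  | succ c ih =>
    have hb1 : ((b:ℚ)+1) ≠ 0 := by positivity
    have ha1 : ((b:ℚ)+c+1) ≠ 0 := by positivity
    have ha2 : ((b:ℚ)+c+2) ≠ 0 := by positivity
    have hc1 : ((c:ℚ)+1) ≠ 0 := by positivity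
    have step : ∀ m ∈ Finset.range (b+1),
        (Nat.choose b m : ℚ) / ((Nat.choose (b+(c+1)) m : ℚ) * ((m:ℚ)+1))
        = (((b:ℚ)+c+2)/((b:ℚ)+c+1)) * ((Nat.choose b m : ℚ) / ((Nat.choose (b+c) m : ℚ) * ((m:ℚ)+1)))
          - (1/((b:ℚ)+c+1)) * ((Nat.choose b m : ℚ) / (Nat.choose (b+c) m : ℚ)) := by
      intro m hm
      simp only [Finset.mem_range] at hm
      have hmb : m ≤ b := Nat.lt_succ_iff.mp hm
      have hma : m ≤ b + c := le_trans hmb (Nat.le_add_right _ _)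
      have hA : (Nat.choose (b+c) m : ℚ) ≠ 0 := choose_ne _ _ hma
      have hA' : (Nat.choose (b+(c+1)) m : ℚ) ≠ 0 := by
        rw [show b+(c+1) = (b+c)+1 from rfl]
        exact choose_ne _ _ (le_trans hma (Nat.le_succ _))
      have hm1 : ((m:ℚ)+1) ≠ 0 := by positivity
      have hsub : ((b:ℚ)+c+1-m) ≠ 0 := by
        have h' : (m:ℚ) ≤ (b:ℚ)+c := by exact_mod_cast hma
        nlinarith
      have hmul : (Nat.choose (b+c+1) m : ℚ) * ((b:ℚ)+c+1-m) = (Nat.choose (b+c) m : ℚ) * ((b:ℚ)+c+1) := by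
        have := congrArg (Nat.cast (R:=ℚ)) (Nat.choose_mul_succ_eq (b+c) m)
        push_cast [Nat.cast_sub (le_trans hma (Nat.le_succ _))] at this
        linarith
      rw [show b+(c+1) = (b+c)+1 from rfl]
      rw [show ((Nat.choose ((b+c)+1) m : ℚ)) = (Nat.choose (b+c) m : ℚ) * ((b:ℚ)+c+1) / ((b:ℚ)+c+1-m) from
        by field_simp; linear_combination hmul]
      field_simp
      ring
    rw [Finset.sum_congr rfl step, Finset.sum_sub_distrib, ← Finset.mul_sum, ← Finset.mul_sum,
      ih, key0, show b+(c+1)+1 = (b+c+1)+1 from rfl, H_succ' (b+c+1), H_succ' c]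
    push_cast
    field_simp
    ring

lemma sum_trunc (b N : ℕ) (hN : b ≤ N) (f : ℕ → ℚ) (hf : ∀ m, b < m → f m = 0) :
    ∑ m ∈ Finset.Icc 1 N, f m = (∑ m ∈ Finset.range (b+1), f m) - f 0 := by
  have h1 : ∑ m ∈ Finset.Icc 1 N, f m = ∑ m ∈ Finset.Icc 1 b, f m := by
    symm
    apply Finset.sum_subset (Finset.Icc_subset_Icc_right hN)
    intro x hx hx'
    apply hf
    simp only [Finset.mem_Icc] at hx hx'
    omega
  have h2 : ∑ m ∈ Finset.Icc 1 b, f m = ∑ m ∈ Finset.range b, f (m+1) := by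
    rw [show Finset.Icc 1 b = Finset.Ico 1 (b+1) by rw [Finset.Ico_add_one_right_eq_Icc],
      Finset.sum_Ico_eq_sum_range]
    simp [add_comm]
  rw [h1, h2, Finset.sum_range_succ' f b]
  ring

lemma final (x J K h1 h2 : ℚ) (hx : 0 ≤ x) (hJ : 1 ≤ J) (hK : 1 ≤ K) :
  (x + 1) / (x + 1 + J + K) * (J * (J - 1) / ((J + K) * (J + K - 1))) *
          ((J + K + x + 1) / (x + 1) - 1) +
        (x + 1) / (x + 1 + J + K) *
            (2 * J / (J + K) - 2 * (J * (J - 1) / ((J + K) * (J + K - 1)))) *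
          ((J + K + x + 1) / (J + K + 1) * (h1 - h2) - 1) -
      (x + 1) / (x + 1 + J + K) * ((J + K + x + 1) / (x + K + 1) - 1) =
    J * (J - 1) / ((x + 1 + J + K) * (J + K - 1)) -
          (x + 1) * J / ((x + 1 + J + K) * (x + 1 + K)) -
        2 * (x + 1) * J * K / ((x + 1 + J + K) * ((J + K) * (J + K - 1))) +
      2 * (x + 1) * J * K / ((J + K + 1) * ((J + K) * (J + K - 1))) * (h1 - h2) := by
  have d1 : x + 1 + J + K ≠ 0 := by positivity
  have d2 : J + K - 1 ≠ 0 := by nlinarith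
  have d3 : J + K ≠ 0 := by positivity
  have d4 : J + K + 1 ≠ 0 := by positivity
  have d5 : x + 1 ≠ 0 := by positivity
  have d6 : x + K + 1 ≠ 0 := by positivity
  have r1 : (J + K + x + 1) / (x + 1) - 1 = (J + K) / (x + 1) := by
    rw [div_sub_one d5, show J + K + x + 1 - (x + 1) = J + K from by ring]
  have r2 : (J + K + x + 1) / (x + K + 1) - 1 = J / (x + K + 1) := by
    rw [div_sub_one d6, show J + K + x + 1 - (x + K + 1) = J from by ring]
  have r3 : 2 * J / (J + K) - 2 * (J * (J - 1) / ((J + K) * (J + K - 1)))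
      = 2 * J * K / ((J + K) * (J + K - 1)) := by
    field_simp
    ring
  rw [r1, r2, r3]
  have r4 : (x + 1) / (x + 1 + J + K) * (J * (J - 1) / ((J + K) * (J + K - 1))) * ((J + K) / (x + 1))
      = J * (J - 1) / ((x + 1 + J + K) * (J + K - 1)) := by
    field_simp
  have r5 : (x + 1) / (x + 1 + J + K) * (2 * J * K / ((J + K) * (J + K - 1))) *
        ((J + K + x + 1) / (J + K + 1) * (h1 - h2) - 1)
      = 2 * (x + 1) * J * K / ((J + K + 1) * ((J + K) * (J + K - 1))) * (h1 - h2)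
        - 2 * (x + 1) * J * K / ((x + 1 + J + K) * ((J + K) * (J + K - 1))) := by
    rw [show J + K + x + 1 = x + 1 + J + K from by ring]
    field_simp
  have r6 : (x + 1) / (x + 1 + J + K) * (J / (x + K + 1))
      = (x + 1) * J / ((x + 1 + J + K) * (x + 1 + K)) := by
    rw [div_mul_div_comm, show x + K + 1 = x + 1 + K from by ring]
  rw [r4, r5, r6]
  ring

set_option maxHeartbeats 1000000 in
/-- Closed form for the coefficient `α(n, i, j, k)` of the three-allele sampling formula. -/
theorem stmt16 (ni nj nk : ℕ) (hi : 1 ≤ ni) (hj : 1 ≤ nj) (hk : 1 ≤ nk) :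
    (∑ m ∈ Finset.Icc 1 (ni + nj + nk),
        ((ni : ℚ) / ((ni : ℚ) + nj + nk)) *
          ((Nat.choose (nj + nk) m : ℚ) / (Nat.choose (ni + nj + nk - 1) m : ℚ)) *
          (((Nat.descFactorial nj 2 : ℚ) / (Nat.descFactorial (nj + nk) 2 : ℚ)) *
              (((m : ℚ) - 1) / ((m : ℚ) + 1)) +
            (2 * (nj : ℚ) / ((nj : ℚ) + nk)) * (1 / ((m : ℚ) + 1)))) -
      (∑ m ∈ Finset.Icc 1 (ni + nj + nk),
        ((ni : ℚ) / ((ni : ℚ) + nj + nk)) *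
          ((Nat.choose nj m : ℚ) / (Nat.choose (ni + nj + nk - 1) m : ℚ))) =
    (Nat.descFactorial nj 2 : ℚ) / (((ni : ℚ) + nj + nk) * ((nj : ℚ) + nk - 1)) -
      (ni : ℚ) * nj / (((ni : ℚ) + nj + nk) * ((ni : ℚ) + nk)) -
      2 * (ni : ℚ) * nj * nk /
        (((ni : ℚ) + nj + nk) * (Nat.descFactorial (nj + nk) 2 : ℚ)) +
      2 * (ni : ℚ) * nj * nk / (Nat.descFactorial (nj + nk + 1) 3 : ℚ) *
        (H (ni + nj + nk) - H (ni - 1)) := by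
  obtain ⟨i, rfl⟩ : ∃ i, ni = i + 1 := ⟨ni - 1, by omega⟩
  simp only [show i + 1 + nj + nk - 1 = nj + nk + i from by omega,
    show i + 1 - 1 = i from by omega]
  push_cast
  set P : ℚ := ((i:ℚ) + 1) / ((i:ℚ) + 1 + nj + nk) with hP
  set q1 : ℚ := (Nat.descFactorial nj 2 : ℚ) / (Nat.descFactorial (nj + nk) 2 : ℚ) with hq1
  -- Sum B
  have hB : (∑ m ∈ Finset.Icc 1 (i + 1 + nj + nk),
        P * ((Nat.choose nj m : ℚ) / (Nat.choose (nj + nk + i) m : ℚ)))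
      = P * ((((nj:ℚ)+nk+i+1)/((i:ℚ)+nk+1)) - 1) := by
    rw [← Finset.mul_sum]
    congr 1
    rw [sum_trunc nj (i+1+nj+nk) (by omega)
      (fun m => (Nat.choose nj m : ℚ) / (Nat.choose (nj + nk + i) m : ℚ))
      (fun m hm => by simp [Nat.choose_eq_zero_of_lt hm])]
    have kB := key0 nj (i+nk)
    simp only [show nj+(i+nk) = nj+nk+i from by omega] at kB
    rw [kB]
    push_cast
    norm_num
    ring
  -- Sum A split
  have hA : (∑ m ∈ Finset.Icc 1 (i + 1 + nj + nk),
        P * ((Nat.choose (nj + nk) m : ℚ) / (Nat.choose (nj + nk + i) m : ℚ)) *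
          (q1 * (((m : ℚ) - 1) / ((m : ℚ) + 1)) +
            (2 * (nj : ℚ) / ((nj : ℚ) + nk)) * (1 / ((m : ℚ) + 1))))
      = P * q1 * ((((nj:ℚ)+nk+i+1)/((i:ℚ)+1)) - 1)
        + P * (2 * (nj : ℚ) / ((nj : ℚ) + nk) - 2 * q1) *
          (((((nj:ℚ)+nk)+i+1)/(((nj:ℚ)+nk)+1)) * (H (i + 1 + nj + nk) - H i) - 1) := by
    have step : ∀ m ∈ Finset.Icc 1 (i + 1 + nj + nk),
        P * ((Nat.choose (nj + nk) m : ℚ) / (Nat.choose (nj + nk + i) m : ℚ)) *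
          (q1 * (((m : ℚ) - 1) / ((m : ℚ) + 1)) +
            (2 * (nj : ℚ) / ((nj : ℚ) + nk)) * (1 / ((m : ℚ) + 1)))
        = P * q1 * ((Nat.choose (nj + nk) m : ℚ) / (Nat.choose (nj + nk + i) m : ℚ))
          + P * (2 * (nj : ℚ) / ((nj : ℚ) + nk) - 2 * q1) *
            ((Nat.choose (nj + nk) m : ℚ) / ((Nat.choose (nj + nk + i) m : ℚ) * ((m:ℚ)+1))) := by
      intro m _
      rw [← div_div]
      generalize (Nat.choose (nj + nk) m : ℚ) / (Nat.choose (nj + nk + i) m : ℚ) = u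
      have hm1 : ((m:ℚ)+1) ≠ 0 := by positivity
      field_simp
      ring
    rw [Finset.sum_congr rfl step, Finset.sum_add_distrib, ← Finset.mul_sum, ← Finset.mul_sum]
    rw [sum_trunc (nj+nk) (i+1+nj+nk) (by omega)
      (fun m => (Nat.choose (nj+nk) m : ℚ) / (Nat.choose (nj + nk + i) m : ℚ))
      (fun m hm => by simp [Nat.choose_eq_zero_of_lt hm])]
    rw [sum_trunc (nj+nk) (i+1+nj+nk) (by omega)
      (fun m => (Nat.choose (nj+nk) m : ℚ) / ((Nat.choose (nj + nk + i) m : ℚ) * ((m:ℚ)+1)))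
      (fun m hm => by simp [Nat.choose_eq_zero_of_lt hm])]
    have k0 := key0 (nj+nk) i
    have k1 := key1 (nj+nk) i
    rw [show nj+nk+i+1 = i+1+nj+nk from by omega] at k1
    rw [k0, k1]
    push_cast
    norm_num
  rw [hA, hB]
  -- descFactorial casts
  have hjk1 : (1:ℕ) ≤ nj + nk := by omega
  have e1 : (Nat.descFactorial nj 2 : ℚ) = (nj:ℚ) * ((nj:ℚ) - 1) := by
    simp only [Nat.descFactorial_succ, Nat.descFactorial_zero, Nat.sub_zero, mul_one]
    push_cast [Nat.cast_sub hj]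
    ring
  have e2 : (Nat.descFactorial (nj+nk) 2 : ℚ) = ((nj:ℚ)+nk) * ((nj:ℚ)+nk - 1) := by
    simp only [Nat.descFactorial_succ, Nat.descFactorial_zero, Nat.sub_zero, mul_one]
    push_cast [Nat.cast_sub hjk1]
    ring
  have e3 : (Nat.descFactorial (nj+nk+1) 3 : ℚ) = ((nj:ℚ)+nk+1) * (((nj:ℚ)+nk) * ((nj:ℚ)+nk - 1)) := by
    simp only [Nat.descFactorial_succ, Nat.descFactorial_zero, Nat.sub_zero, mul_one]
    rw [show nj+nk+1-2 = nj+nk-1 from by omega, show nj+nk+1-1 = nj+nk from by omega]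
    push_cast [Nat.cast_sub hjk1]
    ring
  rw [hq1, e1, e2, e3, hP]
  have hj' : (1:ℚ) ≤ (nj:ℚ) := by exact_mod_cast hj
  have hk' : (1:ℚ) ≤ (nk:ℚ) := by exact_mod_cast hk
  have hi' : (0:ℚ) ≤ (i:ℚ) := by positivity
  generalize H (i + 1 + nj + nk) = h1
  generalize H i = h2
  exact final (i:ℚ) (nj:ℚ) (nk:ℚ) h1 h2 hi' hj' hk'
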